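/- If A ∈ M_n(ℂ) is Hermitian, then W_k(A) is the real interval [λ_n(A)+...+λ_{n-k+1}(A), λ_1(A)+...+λ_k(A)]. -/

import Mathlib

open Matrix

/-- `P` is an orthogonal projection of rank `k`. -/
def IsProjOfRank {m : Type*} [Fintype m] [DecidableEq m]
    (P : Matrix m m ℂ) (k : ℕ) : Prop :=
  P * P = P ∧ Pᴴ = P ∧ P.rank = k

/-- The `k`-numerical range `W_k(A) = { tr (A P) : P an orthogonal projection of rank k }`. -/
def WK {m : Type*} [Fintype m] [DecidableEq m] (k : ℕ) (A : Matrix m m ℂ) : Set ℂ :=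
  {z | ∃ P : Matrix m m ℂ, IsProjOfRank P k ∧ z = (A * P).trace}

/-- The `k`-numerical radius `w_k(A) = max { |tr (A P)| : P a rank-k orthogonal projection }`. -/
noncomputable def wk {m : Type*} [Fintype m] [DecidableEq m] (k : ℕ) (A : Matrix m m ℂ) : ℝ :=
  sSup {r : ℝ | ∃ P : Matrix m m ℂ, IsProjOfRank P k ∧ r = ‖(A * P).trace‖}

/-- `A` and `B` are parallel with respect to the `k`-numerical radius. -/
noncomputable def ParallelWk {m : Type*} [Fintype m] [DecidableEq m]
    (k : ℕ) (A B : Matrix m m ℂ) : Prop :=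
  ∃ μ : ℂ, ‖μ‖ = 1 ∧ wk k (A + μ • B) = wk k A + wk k B

/-- Sum of the `k` largest eigenvalues of a Hermitian matrix (`0` if not Hermitian). -/
noncomputable def sumKLargest {m : Type*} [Fintype m] [DecidableEq m]
    (k : ℕ) (A : Matrix m m ℂ) : ℝ :=
  if h : A.IsHermitian then
    sSup {r : ℝ | ∃ s : Finset m, s.card = k ∧ r = ∑ i ∈ s, h.eigenvalues i}
  else 0

/-- Sum of the `k` smallest eigenvalues of a Hermitian matrix (`0` if not Hermitian). -/
noncomputable def sumKSmallest {m : Type*} [Fintype m] [DecidableEq m]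
    (k : ℕ) (A : Matrix m m ℂ) : ℝ :=
  if h : A.IsHermitian then
    sInf {r : ℝ | ∃ s : Finset m, s.card = k ∧ r = ∑ i ∈ s, h.eigenvalues i}
  else 0

open Finset

/-- The set of indices `i : Fin n` with `a ≤ i < b`. -/
def finIco (n a b : ℕ) : Finset (Fin n) :=
  Finset.univ.filter (fun i => a ≤ i.val ∧ i.val < b)

lemma mem_finIco {n a b : ℕ} {i : Fin n} : i ∈ finIco n a b ↔ a ≤ i.val ∧ i.val < b := by
  simp [finIco]

lemma sum_finIco {n a b : ℕ} (hb : b ≤ n) (f : Fin n → ℝ) (g : ℕ → ℝ)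
    (hfg : ∀ (m : ℕ) (h : m < n), g m = f ⟨m, h⟩) :
    ∑ i ∈ finIco n a b, f i = ∑ m ∈ Finset.Ico a b, g m := by
  refine (Finset.sum_bij (fun (m : ℕ) (hm : m ∈ Finset.Ico a b) =>
      (⟨m, lt_of_lt_of_le (Finset.mem_Ico.1 hm).2 hb⟩ : Fin n)) ?_ ?_ ?_ ?_).symm
  · intro m hm
    simp only [mem_finIco]
    exact ⟨(Finset.mem_Ico.1 hm).1, (Finset.mem_Ico.1 hm).2⟩
  · intro m hm m' hm' h
    simpa using congrArg Fin.val h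
  · intro i hi
    exact ⟨i.val, Finset.mem_Ico.2 ⟨(mem_finIco.1 hi).1, (mem_finIco.1 hi).2⟩, rfl⟩
  · intro m hm
    exact hfg m _
lemma card_finIco {n a b : ℕ} (hb : b ≤ n) : (finIco n a b).card = b - a := by
  have := sum_finIco (a := a) hb (fun _ => (1:ℝ)) (fun _ => (1:ℝ)) (fun _ _ => rfl)
  rw [Finset.sum_const, Finset.sum_const] at this
  have h2 : ((finIco n a b).card : ℝ) = ((Finset.Ico a b).card : ℝ) := by simpa using this
  have h3 : (finIco n a b).card = (Finset.Ico a b).card := by exact_mod_cast h2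
  rw [h3, Nat.card_Ico]


lemma upper_bound {n k : ℕ} (hk : 1 ≤ k) (hkn : k ≤ n) (μ : Fin n → ℝ) (hμ : Monotone μ)
    (t : Fin n → ℝ) (h0 : ∀ i, 0 ≤ t i) (h1 : ∀ i, t i ≤ 1) (ht : ∑ i, t i = k) :
    ∑ i, μ i * t i ≤ ∑ i ∈ finIco n (n - k) n, μ i := by
  set θ : ℝ := μ ⟨n - k, by omega⟩ with hθ
  have hcard : (finIco n (n - k) n).card = k := by rw [card_finIco le_rfl]; omega
  have step : ∑ i, μ i * t i ≤
      ∑ i, ((if i ∈ finIco n (n - k) n then μ i - θ else 0) + θ * t i) := by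
    refine Finset.sum_le_sum fun i _ => ?_
    by_cases hi : i ∈ finIco n (n - k) n
    · rw [if_pos hi]
      have hμi : θ ≤ μ i := hμ (by
        show (⟨n - k, by omega⟩ : Fin n) ≤ i
        exact (mem_finIco.1 hi).1)
      nlinarith [h1 i]
    · rw [if_neg hi]
      have hlt : i.val < n - k := by
        have hni := mem_finIco.not.1 hi
        have := i.isLt
        omega
      have hile : i ≤ (⟨n - k, by omega⟩ : Fin n) := Fin.le_def.mpr (by simpa using le_of_lt hlt)
      have hμi : μ i ≤ θ := hμ hile
      nlinarith [h0 i]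
  calc ∑ i, μ i * t i ≤ _ := step
    _ = (∑ i, if i ∈ finIco n (n - k) n then μ i - θ else 0) + θ * ∑ i, t i := by
        rw [Finset.sum_add_distrib, Finset.mul_sum]
    _ = (∑ i ∈ finIco n (n - k) n, (μ i - θ)) + θ * k := by
        rw [ht, Finset.sum_ite_mem, Finset.univ_inter]
    _ = ∑ i ∈ finIco n (n - k) n, μ i := by
        rw [Finset.sum_sub_distrib, Finset.sum_const, hcard]
        ring

lemma lower_bound {n k : ℕ} (hk : 1 ≤ k) (hkn : k ≤ n) (μ : Fin n → ℝ) (hμ : Monotone μ)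
    (t : Fin n → ℝ) (h0 : ∀ i, 0 ≤ t i) (h1 : ∀ i, t i ≤ 1) (ht : ∑ i, t i = k) :
    ∑ i ∈ finIco n 0 k, μ i ≤ ∑ i, μ i * t i := by
  set θ : ℝ := μ ⟨k - 1, by omega⟩ with hθ
  have hcard : (finIco n 0 k).card = k := by rw [card_finIco hkn]; omega
  have step : ∑ i, ((if i ∈ finIco n 0 k then μ i - θ else 0) + θ * t i) ≤
      ∑ i, μ i * t i := by
    refine Finset.sum_le_sum fun i _ => ?_
    by_cases hi : i ∈ finIco n 0 k
    · rw [if_pos hi]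
      have hμi : μ i ≤ θ := hμ (Fin.le_def.mpr (by
        have := (mem_finIco.1 hi).2
        simp only []
        omega))
      nlinarith [h1 i]
    · rw [if_neg hi]
      have hlt : k ≤ i.val := by
        have hni := mem_finIco.not.1 hi
        have := i.isLt
        omega
      have hile : (⟨k - 1, by omega⟩ : Fin n) ≤ i := Fin.le_def.mpr (by simpa using by omega)
      have hμi : θ ≤ μ i := hμ hile
      nlinarith [h0 i]
  calc ∑ i ∈ finIco n 0 k, μ i
      = (∑ i, if i ∈ finIco n 0 k then μ i - θ else 0) + θ * ∑ i, t i := by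
        rw [ht, Finset.sum_ite_mem, Finset.univ_inter, Finset.sum_sub_distrib,
          Finset.sum_const, hcard]
        ring
    _ = ∑ i, ((if i ∈ finIco n 0 k then μ i - θ else 0) + θ * t i) := by
        rw [Finset.sum_add_distrib, Finset.mul_sum]
    _ ≤ ∑ i, μ i * t i := step


lemma trace_eq_rank_proj {n : ℕ} (Q : Matrix (Fin n) (Fin n) ℂ)
    (h2 : Q * Q = Q) (hH : Qᴴ = Q) : Q.trace = (Q.rank : ℂ) := by
  have hQ : Q.IsHermitian := hH
  set U : Matrix (Fin n) (Fin n) ℂ := (hQ.eigenvectorUnitary : Matrix (Fin n) (Fin n) ℂ) with hUdef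
  have hU1 : U * star U = 1 := (Matrix.mem_unitaryGroup_iff).mp hQ.eigenvectorUnitary.2
  have hU2 : star U * U = 1 := (Matrix.mem_unitaryGroup_iff').mp hQ.eigenvectorUnitary.2
  set lam := hQ.eigenvalues with hlam
  have hdiag : star U * Q * U = Matrix.diagonal (RCLike.ofReal ∘ lam) := by
    have := hQ.conjStarAlgAut_star_eigenvectorUnitary
    rw [Unitary.conjStarAlgAut_apply, Unitary.coe_star, star_star] at this
    exact this
  -- eigenvalues are 0 or 1
  have hsq : ∀ i, lam i * lam i = lam i := by
    intro i
    have : (star U * Q * U) * (star U * Q * U) = star U * Q * U := by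
      calc (star U * Q * U) * (star U * Q * U) = star U * Q * (U * star U) * Q * U := by
            noncomm_ring
        _ = star U * (Q * Q) * U := by rw [hU1]; noncomm_ring
        _ = star U * Q * U := by rw [h2]
    rw [hdiag, Matrix.diagonal_mul_diagonal] at this
    have := congrFun (congrFun this i) i
    rw [Matrix.diagonal_apply_eq, Matrix.diagonal_apply_eq] at this
    simp only [Function.comp_apply, Pi.mul_apply] at this
    exact_mod_cast this
  have h01 : ∀ i, lam i = 0 ∨ lam i = 1 := by
    intro i
    have h := hsq i
    rcases eq_or_ne (lam i) 0 with h0 | h0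
    · exact Or.inl h0
    · right
      field_simp at h
      tauto
  -- trace Q = sum of eigenvalues
  have htr : Q.trace = ∑ i, (lam i : ℂ) := by
    conv_lhs => rw [hQ.spectral_theorem, Unitary.conjStarAlgAut_apply]
    rw [Matrix.trace_mul_cycle, ← hUdef, hU2, one_mul, Matrix.trace_diagonal]
    rfl
  -- sum of eigenvalues = number of nonzero eigenvalues = rank
  rw [htr, hQ.rank_eq_card_non_zero_eigs]
  rw [Fintype.card_subtype]
  rw [Finset.card_eq_sum_ones]
  push_cast
  rw [Finset.sum_filter]
  congr 1
  ext i
  rcases h01 i with h | h <;> rw [hlam] at h <;> simp [h, hlam]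


lemma proj_diag {n : ℕ} (Q : Matrix (Fin n) (Fin n) ℂ)
    (h2 : Q * Q = Q) (hH : Qᴴ = Q) (i : Fin n) :
    Q i i = ((Q i i).re : ℂ) ∧ 0 ≤ (Q i i).re ∧ (Q i i).re ≤ 1 := by
  have key : Q i i = ((∑ j, Complex.normSq (Q i j) : ℝ) : ℂ) := by
    conv_lhs => rw [← h2]
    rw [Matrix.mul_apply]
    push_cast
    refine Finset.sum_congr rfl fun j _ => ?_
    have : Q j i = star (Q i j) := by
      conv_lhs => rw [← hH]
      rw [Matrix.conjTranspose_apply]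
    rw [this, Complex.star_def, Complex.mul_conj]
  set s : ℝ := ∑ j, Complex.normSq (Q i j) with hs
  have hre : (Q i i).re = s := by rw [key]; simp
  have hs0 : 0 ≤ s := Finset.sum_nonneg fun j _ => Complex.normSq_nonneg _
  have hterm : Complex.normSq (Q i i) ≤ s :=
    Finset.single_le_sum (fun j _ => Complex.normSq_nonneg _) (Finset.mem_univ i)
  have hQii : Complex.normSq (Q i i) = s * s := by rw [key]; simp [Complex.normSq_ofReal]
  have hs1 : s ≤ 1 := by nlinarith
  refine ⟨by rw [key]; simp, by rw [hre]; exact hs0, by rw [hre]; exact hs1⟩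


lemma exists_proj {n k : ℕ} (hk : 1 ≤ k)
    (A : Matrix (Fin n) (Fin n) ℂ) (hA : A.IsHermitian)
    (S : Finset (Fin n)) (a b : Fin n) (θ : ℝ) (hθ0 : 0 ≤ θ) (hθ1 : θ ≤ 1)
    (ha : a ∉ S) (hb : b ∉ S) (hab : a ≠ b) (hcard : S.card = k - 1) :
    (((∑ i ∈ S, hA.eigenvalues i) + (1 - θ) * hA.eigenvalues a
      + θ * hA.eigenvalues b : ℝ) : ℂ) ∈ WK k A := by
  classical
  set U : Matrix (Fin n) (Fin n) ℂ := (hA.eigenvectorUnitary : Matrix (Fin n) (Fin n) ℂ)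
    with hUdef
  have hU1 : U * star U = 1 := (Matrix.mem_unitaryGroup_iff).mp hA.eigenvectorUnitary.2
  have hU2 : star U * U = 1 := (Matrix.mem_unitaryGroup_iff').mp hA.eigenvectorUnitary.2
  set lam := hA.eigenvalues with hlam
  set v : Fin n → ℂ := fun i =>
    if i = a then (Real.sqrt (1 - θ) : ℂ) else if i = b then (Real.sqrt θ : ℂ) else 0 with hv
  set d : Fin n → ℂ := fun i => if i ∈ S then 1 else 0 with hd
  have hva : v a = (Real.sqrt (1 - θ) : ℂ) := by simp [hv]
  have hvb : v b = (Real.sqrt θ : ℂ) := by simp [hv, hab.symm, hab]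
  have hvaa : v a * v a = ((1 - θ : ℝ) : ℂ) := by
    rw [hva, ← Complex.ofReal_mul, Real.mul_self_sqrt (by linarith)]
  have hvbb : v b * v b = ((θ : ℝ) : ℂ) := by
    rw [hvb, ← Complex.ofReal_mul, Real.mul_self_sqrt hθ0]
  have hvstar : ∀ i, star (v i) = v i := by
    intro i
    simp only [hv]
    split_ifs <;> simp [Complex.star_def, Complex.conj_ofReal]
  have hvzero : ∀ i, i ≠ a → i ≠ b → v i = 0 := by
    intro i hia hib; simp [hv, hia, hib]
  have hvsum : ∑ i, v i * v i = 1 := by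
    rw [Finset.sum_eq_add_of_mem a b (Finset.mem_univ a) (Finset.mem_univ b) hab
      (fun c _ hc => by rw [hvzero c hc.1 hc.2]; ring)]
    rw [hvaa, hvbb]
    push_cast
    ring
  have hdv : ∀ i, d i * v i = 0 := by
    intro i
    by_cases hiS : i ∈ S
    · have hia : i ≠ a := fun h => ha (h ▸ hiS)
      have hib : i ≠ b := fun h => hb (h ▸ hiS)
      rw [hvzero i hia hib, mul_zero]
    · simp [hd, hiS]
  have hds : star d = d := by
    funext i
    by_cases hiS : i ∈ S <;> simp [hd, hiS]
  have hddfun : ∀ i, d i * d i = d i := by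
    intro i
    by_cases hiS : i ∈ S <;> simp [hd, hiS]
  set R : Matrix (Fin n) (Fin n) ℂ := Matrix.vecMulVec v v with hR
  set Q : Matrix (Fin n) (Fin n) ℂ := Matrix.diagonal d + R with hQ
  have hRapp : ∀ i j, R i j = v i * v j := fun i j => rfl
  have hdd : Matrix.diagonal d * Matrix.diagonal d = Matrix.diagonal d := by
    rw [Matrix.diagonal_mul_diagonal]
    exact congrArg Matrix.diagonal (funext hddfun)
  have hdR : Matrix.diagonal d * R = 0 := by
    ext i j
    rw [Matrix.diagonal_mul, hRapp, ← mul_assoc, hdv, zero_mul]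
    rfl
  have hRd : R * Matrix.diagonal d = 0 := by
    ext i j
    rw [Matrix.mul_diagonal, hRapp]
    have h0 : v j * d j = 0 := by rw [mul_comm]; exact hdv j
    rw [mul_assoc, h0, mul_zero]
    rfl
  have hRR : R * R = R := by
    ext i j
    rw [Matrix.mul_apply]
    simp only [hRapp]
    calc ∑ l, v i * v l * (v l * v j) = (v i * v j) * ∑ l, v l * v l := by
          rw [Finset.mul_sum]; congr 1; funext l; ring
      _ = v i * v j := by rw [hvsum, mul_one]
  have hQ2 : Q * Q = Q := by
    rw [hQ, add_mul, mul_add, mul_add, hdd, hdR, hRd, hRR, add_zero, zero_add]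
  have hQH : Qᴴ = Q := by
    rw [hQ, Matrix.conjTranspose_add, Matrix.diagonal_conjTranspose, hds]
    congr 1
    ext i j
    rw [Matrix.conjTranspose_apply, hRapp, hRapp, star_mul', hvstar, hvstar, mul_comm]
  have hQstar : star Q = Q := by rw [Matrix.star_eq_conjTranspose, hQH]
  have htrQ : Q.trace = (k : ℂ) := by
    rw [hQ, Matrix.trace_add, Matrix.trace_diagonal]
    have h1 : ∑ i, d i = ((k - 1 : ℕ) : ℂ) := by
      simp only [hd, Finset.sum_ite_mem, Finset.univ_inter, Finset.sum_const, hcard,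
        nsmul_eq_mul, mul_one]
    have h2 : R.trace = 1 := by
      rw [Matrix.trace]
      simp only [Matrix.diag_apply, hRapp]
      exact hvsum
    rw [h1, h2, Nat.cast_sub hk, Nat.cast_one]
    ring
  have hrankQ : Q.rank = k := by
    have h := trace_eq_rank_proj Q hQ2 hQH
    rw [htrQ] at h
    exact_mod_cast h.symm
  have hQback : Q = star U * (U * Q * star U) * U := by
    calc Q = (star U * U) * Q * (star U * U) := by rw [hU2, one_mul, mul_one]
      _ = star U * (U * Q * star U) * U := by noncomm_ring
  refine ⟨U * Q * star U, ⟨?_, ?_, ?_⟩, ?_⟩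
  · calc U * Q * star U * (U * Q * star U)
        = U * (Q * ((star U * U) * (Q * star U))) := by simp only [mul_assoc]
      _ = U * (Q * (Q * star U)) := by rw [hU2, one_mul]
      _ = U * (Q * Q) * star U := by simp only [mul_assoc]
      _ = U * Q * star U := by rw [hQ2, mul_assoc]
  · rw [← Matrix.star_eq_conjTranspose]
    simp only [StarMul.star_mul, star_star, hQstar, mul_assoc]
  · refine le_antisymm ?_ ?_
    · calc (U * Q * star U).rank ≤ (U * Q).rank := Matrix.rank_mul_le_left _ _
        _ ≤ Q.rank := Matrix.rank_mul_le_right _ _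
        _ = k := hrankQ
    · calc k = Q.rank := hrankQ.symm
        _ = (star U * (U * Q * star U) * U).rank := by rw [← hQback]
        _ ≤ (star U * (U * Q * star U)).rank := Matrix.rank_mul_le_left _ _
        _ ≤ (U * Q * star U).rank := Matrix.rank_mul_le_right _ _
  · set D : Matrix (Fin n) (Fin n) ℂ := Matrix.diagonal (RCLike.ofReal ∘ lam) with hD
    have hAP : (A * (U * Q * star U)).trace = (D * Q).trace := by
      conv_lhs => rw [hA.spectral_theorem, Unitary.conjStarAlgAut_apply]
      have e1 : (U * D * star U) * (U * Q * star U)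
          = U * (D * ((star U * U) * (Q * star U))) := by simp only [mul_assoc]
      have e2 : U * (D * ((star U * U) * (Q * star U))) = U * (D * Q) * star U := by
        rw [hU2, one_mul]; simp only [mul_assoc]
      rw [e1, e2, Matrix.trace_mul_cycle, hU2, one_mul]
    rw [hAP]
    have hDQ : (D * Q).trace = ∑ i, (lam i : ℂ) * Q i i := by
      rw [Matrix.trace]
      refine Finset.sum_congr rfl fun i _ => ?_
      rw [Matrix.diag_apply, Matrix.diagonal_mul]
      rfl
    rw [hDQ]
    have hQii : ∀ i, Q i i = d i + v i * v i := by
      intro i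
      rw [hQ]
      show Matrix.diagonal d i i + R i i = _
      rw [Matrix.diagonal_apply_eq, hRapp]
    have hsplit : ∑ i, (lam i : ℂ) * Q i i
        = (∑ i, (lam i : ℂ) * d i) + ∑ i, (lam i : ℂ) * (v i * v i) := by
      rw [← Finset.sum_add_distrib]
      refine Finset.sum_congr rfl fun i _ => ?_
      rw [hQii i]; ring
    have hpart1 : ∑ i, (lam i : ℂ) * d i = ((∑ i ∈ S, lam i : ℝ) : ℂ) := by
      simp only [hd, mul_ite, mul_one, mul_zero, Finset.sum_ite_mem, Finset.univ_inter]
      push_cast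
      rfl
    have hpart2 : ∑ i, (lam i : ℂ) * (v i * v i)
        = (((1 - θ) * lam a + θ * lam b : ℝ) : ℂ) := by
      rw [Finset.sum_eq_add_of_mem a b (Finset.mem_univ a) (Finset.mem_univ b) hab
        (fun c _ hc => by rw [hvzero c hc.1 hc.2]; ring)]
      rw [hvaa, hvbb]
      push_cast
      ring
    rw [hsplit, hpart1, hpart2]
    push_cast
    ring


section eigs
variable {n k : ℕ} (hk : 1 ≤ k) (hkn : k ≤ n) (A : Matrix (Fin n) (Fin n) ℂ)
  (hA : A.IsHermitian)

lemma isGreatest_eigsum (hk : 1 ≤ k) (hkn : k ≤ n) (hA : A.IsHermitian) :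
    IsGreatest {r : ℝ | ∃ s : Finset (Fin n), s.card = k ∧ r = ∑ i ∈ s, hA.eigenvalues i}
      (∑ i ∈ finIco n (n - k) n, hA.eigenvalues (Tuple.sort hA.eigenvalues i)) := by
  classical
  set lam := hA.eigenvalues with hlam
  set σ := Tuple.sort lam with hσ
  have hμ : Monotone (fun i => lam (σ i)) := Tuple.monotone_sort lam
  constructor
  · refine ⟨(finIco n (n - k) n).image σ, ?_, ?_⟩
    · rw [Finset.card_image_of_injective _ σ.injective, card_finIco le_rfl]
      omega
    · rw [Finset.sum_image (fun i _ j _ h => σ.injective h)]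
  · rintro r ⟨s, hs, rfl⟩
    set t : Fin n → ℝ := fun i => if i ∈ s then 1 else 0 with htdef
    have h0 : ∀ i, 0 ≤ t i := fun i => by simp [htdef]; split_ifs <;> norm_num
    have h1 : ∀ i, t i ≤ 1 := fun i => by simp [htdef]; split_ifs <;> norm_num
    have htsum : ∑ i, t (σ i) = (k : ℝ) := by
      rw [Equiv.sum_comp σ t]
      simp only [htdef, Finset.sum_ite_mem, Finset.univ_inter, Finset.sum_const, hs,
        nsmul_eq_mul, mul_one]
    have key := upper_bound hk hkn (fun i => lam (σ i)) hμ (fun i => t (σ i))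
      (fun i => h0 _) (fun i => h1 _) htsum
    have heq : ∑ i, lam (σ i) * t (σ i) = ∑ i ∈ s, lam i := by
      rw [Equiv.sum_comp σ (fun i => lam i * t i)]
      simp [htdef, mul_ite, Finset.sum_ite_mem]
    rw [← heq]
    exact key

lemma isLeast_eigsum (hk : 1 ≤ k) (hkn : k ≤ n) (hA : A.IsHermitian) :
    IsLeast {r : ℝ | ∃ s : Finset (Fin n), s.card = k ∧ r = ∑ i ∈ s, hA.eigenvalues i}
      (∑ i ∈ finIco n 0 k, hA.eigenvalues (Tuple.sort hA.eigenvalues i)) := by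
  classical
  set lam := hA.eigenvalues with hlam
  set σ := Tuple.sort lam with hσ
  have hμ : Monotone (fun i => lam (σ i)) := Tuple.monotone_sort lam
  constructor
  · refine ⟨(finIco n 0 k).image σ, ?_, ?_⟩
    · rw [Finset.card_image_of_injective _ σ.injective, card_finIco hkn]
      omega
    · rw [Finset.sum_image (fun i _ j _ h => σ.injective h)]
  · rintro r ⟨s, hs, rfl⟩
    set t : Fin n → ℝ := fun i => if i ∈ s then 1 else 0 with htdef
    have h0 : ∀ i, 0 ≤ t i := fun i => by simp [htdef]; split_ifs <;> norm_num
    have h1 : ∀ i, t i ≤ 1 := fun i => by simp [htdef]; split_ifs <;> norm_num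
    have htsum : ∑ i, t (σ i) = (k : ℝ) := by
      rw [Equiv.sum_comp σ t]
      simp only [htdef, Finset.sum_ite_mem, Finset.univ_inter, Finset.sum_const, hs,
        nsmul_eq_mul, mul_one]
    have key := lower_bound hk hkn (fun i => lam (σ i)) hμ (fun i => t (σ i))
      (fun i => h0 _) (fun i => h1 _) htsum
    have heq : ∑ i, lam (σ i) * t (σ i) = ∑ i ∈ s, lam i := by
      rw [Equiv.sum_comp σ (fun i => lam i * t i)]
      simp [htdef, mul_ite, Finset.sum_ite_mem]
    rw [← heq]
    exact key

lemma sumKLargest_eq (hk : 1 ≤ k) (hkn : k ≤ n) (hA : A.IsHermitian) :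
    sumKLargest k A = ∑ i ∈ finIco n (n - k) n, hA.eigenvalues (Tuple.sort hA.eigenvalues i) := by
  rw [sumKLargest, dif_pos hA]
  exact (isGreatest_eigsum A hk hkn hA).csSup_eq

lemma sumKSmallest_eq (hk : 1 ≤ k) (hkn : k ≤ n) (hA : A.IsHermitian) :
    sumKSmallest k A = ∑ i ∈ finIco n 0 k, hA.eigenvalues (Tuple.sort hA.eigenvalues i) := by
  rw [sumKSmallest, dif_pos hA]
  exact (isLeast_eigsum A hk hkn hA).csInf_eq

end eigs


lemma wk_mem_bounds {n k : ℕ} (hk : 1 ≤ k) (hkn : k ≤ n)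
    (A : Matrix (Fin n) (Fin n) ℂ) (hA : A.IsHermitian) {z : ℂ} (hz : z ∈ WK k A) :
    ∃ r : ℝ,
      (∑ i ∈ finIco n 0 k, hA.eigenvalues (Tuple.sort hA.eigenvalues i) ≤ r ∧
       r ≤ ∑ i ∈ finIco n (n - k) n, hA.eigenvalues (Tuple.sort hA.eigenvalues i)) ∧
      (r : ℂ) = z := by
  classical
  obtain ⟨P, ⟨hP2, hPH, hPrank⟩, rfl⟩ := hz
  set lam := hA.eigenvalues with hlam
  set σ := Tuple.sort lam with hσ
  have hμ : Monotone (fun i => lam (σ i)) := Tuple.monotone_sort lam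
  set U : Matrix (Fin n) (Fin n) ℂ := (hA.eigenvectorUnitary : Matrix (Fin n) (Fin n) ℂ)
    with hUdef
  have hU1 : U * star U = 1 := (Matrix.mem_unitaryGroup_iff).mp hA.eigenvectorUnitary.2
  have hU2 : star U * U = 1 := (Matrix.mem_unitaryGroup_iff').mp hA.eigenvectorUnitary.2
  have hPstar : star P = P := by rw [Matrix.star_eq_conjTranspose, hPH]
  set Q : Matrix (Fin n) (Fin n) ℂ := star U * P * U with hQdef
  have hQ2 : Q * Q = Q := by
    calc Q * Q = star U * (P * ((U * star U) * (P * U))) := by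
          rw [hQdef]; simp only [mul_assoc]
      _ = star U * (P * (P * U)) := by rw [hU1, one_mul]
      _ = star U * ((P * P) * U) := by simp only [mul_assoc]
      _ = Q := by rw [hP2, hQdef]; simp only [mul_assoc]
  have hQH : Qᴴ = Q := by
    rw [← Matrix.star_eq_conjTranspose, hQdef]
    simp only [StarMul.star_mul, star_star, hPstar, mul_assoc]
  have htrP : P.trace = (k : ℂ) := by rw [trace_eq_rank_proj P hP2 hPH, hPrank]
  have htrQ : Q.trace = (k : ℂ) := by
    rw [hQdef, Matrix.trace_mul_cycle, hU1, one_mul, htrP]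
  set t : Fin n → ℝ := fun i => (Q i i).re with htdef
  have hQii : ∀ i, Q i i = ((t i : ℝ) : ℂ) := fun i => (proj_diag Q hQ2 hQH i).1
  have h0 : ∀ i, 0 ≤ t i := fun i => (proj_diag Q hQ2 hQH i).2.1
  have h1 : ∀ i, t i ≤ 1 := fun i => (proj_diag Q hQ2 hQH i).2.2
  have hts : ∑ i, t i = (k : ℝ) := by
    have h := htrQ
    rw [Matrix.trace] at h
    simp only [Matrix.diag_apply, hQii] at h
    rw [← Complex.ofReal_sum] at h
    exact_mod_cast h
  set D : Matrix (Fin n) (Fin n) ℂ := Matrix.diagonal (RCLike.ofReal ∘ lam) with hD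
  have tr_diag : ∀ M : Matrix (Fin n) (Fin n) ℂ, (D * M).trace = ∑ i, (lam i : ℂ) * M i i := by
    intro M
    rw [Matrix.trace]
    refine Finset.sum_congr rfl fun i _ => ?_
    rw [Matrix.diag_apply, Matrix.diagonal_mul]
    rfl
  have hz : (A * P).trace = ((∑ i, lam i * t i : ℝ) : ℂ) := by
    have h1' : A * P = U * D * (star U * P) := by
      conv_lhs => rw [hA.spectral_theorem, Unitary.conjStarAlgAut_apply]
      simp only [mul_assoc]
      rfl
    rw [h1', Matrix.trace_mul_cycle, Matrix.trace_mul_comm, tr_diag]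
    have hconv : ∑ i : Fin n, (lam i : ℂ) * (star U * P * U) i i
        = ∑ i, (lam i : ℂ) * ((t i : ℝ) : ℂ) :=
      Finset.sum_congr rfl fun i _ => congrArg (fun z => (lam i : ℂ) * z) (hQii i)
    rw [hconv]
    push_cast
    rfl
  refine ⟨∑ i, lam i * t i, ⟨?_, ?_⟩, hz.symm⟩
  · have key := lower_bound hk hkn (fun i => lam (σ i)) hμ (fun i => t (σ i))
      (fun i => h0 _) (fun i => h1 _) (by rw [Equiv.sum_comp σ t]; exact hts)
    calc ∑ i ∈ finIco n 0 k, lam (σ i) ≤ ∑ i, lam (σ i) * t (σ i) := key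
      _ = ∑ i, lam i * t i := Equiv.sum_comp σ (fun i => lam i * t i)
  · have key := upper_bound hk hkn (fun i => lam (σ i)) hμ (fun i => t (σ i))
      (fun i => h0 _) (fun i => h1 _) (by rw [Equiv.sum_comp σ t]; exact hts)
    calc ∑ i, lam i * t i = ∑ i, lam (σ i) * t (σ i) :=
          (Equiv.sum_comp σ (fun i => lam i * t i)).symm
      _ ≤ ∑ i ∈ finIco n (n - k) n, lam (σ i) := key


lemma mem_WK_of_Icc {n k : ℕ} (hk : 1 ≤ k) (hkn : k ≤ n)
    (A : Matrix (Fin n) (Fin n) ℂ) (hA : A.IsHermitian) (r : ℝ)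
    (hB : ∑ i ∈ finIco n 0 k, hA.eigenvalues (Tuple.sort hA.eigenvalues i) ≤ r)
    (hT : r ≤ ∑ i ∈ finIco n (n - k) n, hA.eigenvalues (Tuple.sort hA.eigenvalues i)) :
    (r : ℂ) ∈ WK k A := by
  classical
  set lam := hA.eigenvalues with hlam
  set σ := Tuple.sort lam with hσ
  have hμ : Monotone (fun i => lam (σ i)) := Tuple.monotone_sort lam
  set U : Matrix (Fin n) (Fin n) ℂ := (hA.eigenvectorUnitary : Matrix (Fin n) (Fin n) ℂ)
    with hUdef
  have hU2 : star U * U = 1 := (Matrix.mem_unitaryGroup_iff').mp hA.eigenvectorUnitary.2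
  have hn : 0 < n := lt_of_lt_of_le hk hkn
  rcases eq_or_lt_of_le hkn with heq | hlt
  -- case k = n
  · have huniv : finIco n 0 k = Finset.univ := by
      ext i
      simp only [mem_finIco, Finset.mem_univ, iff_true]
      exact ⟨Nat.zero_le _, heq ▸ i.isLt⟩
    have huniv' : finIco n (n - k) n = Finset.univ := by
      ext i
      simp only [mem_finIco, Finset.mem_univ, iff_true]
      exact ⟨by omega, i.isLt⟩
    have hsum : ∑ i ∈ finIco n 0 k, lam (σ i) = ∑ i, lam i := by
      rw [huniv]
      exact Equiv.sum_comp σ lam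
    have hr : r = ∑ i, lam i := by
      rw [huniv'] at hT
      rw [huniv] at hB
      have h1 : ∑ i, lam (σ i) = ∑ i, lam i := Equiv.sum_comp σ lam
      linarith [hB, hT, h1.le, h1.ge]
    refine ⟨1, ⟨by rw [mul_one], Matrix.conjTranspose_one, ?_⟩, ?_⟩
    · rw [Matrix.rank_one, Fintype.card_fin, heq]
    · rw [mul_one, hr]
      conv_rhs => rw [hA.spectral_theorem, Unitary.conjStarAlgAut_apply]
      rw [Matrix.trace_mul_cycle, hU2, one_mul, Matrix.trace_diagonal]
      push_cast
      rfl
  -- case k < n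
  · set ν : ℕ → ℝ := fun m => lam (σ ⟨min m (n - 1), by omega⟩) with hνdef
    have hν : ∀ (m : ℕ) (h : m < n), ν m = lam (σ ⟨m, h⟩) := by
      intro m h
      have hfin : (⟨min m (n - 1), by omega⟩ : Fin n) = ⟨m, h⟩ := Fin.ext (by
        show min m (n - 1) = m
        omega)
      simp only [hνdef, hfin]
    have hνmono : Monotone ν := by
      intro x y hxy
      have hle : (⟨min x (n - 1), by omega⟩ : Fin n) ≤ ⟨min y (n - 1), by omega⟩ := by
        rw [Fin.mk_le_mk]
        omega
      exact hμ hle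
    set W : ℕ → ℝ := fun j => ∑ m ∈ Finset.Ico j (j + k), ν m with hWdef
    have hstep : ∀ j, W (j + 1) = W j + (ν (j + k) - ν j) := by
      intro j
      have e1 : ∑ m ∈ Finset.Ico j (j + k + 1), ν m = W j + ν (j + k) := by
        rw [Finset.sum_Ico_succ_top (by omega)]
      have e2 : ∑ m ∈ Finset.Ico j (j + k + 1), ν m = ν j + W (j + 1) := by
        rw [Finset.sum_eq_sum_Ico_succ_bot (by omega)]
        simp only [hWdef]
        rw [show j + k + 1 = j + 1 + k from by omega]
      linarith
    have hWmono : Monotone W := monotone_nat_of_le_succ (fun j => by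
      rw [hstep j]
      have := hνmono (show j ≤ j + k by omega)
      linarith)
    have hW0 : W 0 = ∑ i ∈ finIco n 0 k, lam (σ i) := by
      simp only [hWdef, zero_add]
      exact (sum_finIco hkn (fun i => lam (σ i)) ν hν).symm
    have hWnk : W (n - k) = ∑ i ∈ finIco n (n - k) n, lam (σ i) := by
      simp only [hWdef]
      rw [show n - k + k = n from by omega]
      exact (sum_finIco le_rfl (fun i => lam (σ i)) ν hν).symm
    set j₀ := Nat.findGreatest (fun j => W j ≤ r) (n - k - 1) with hj₀def
    have hj₀le : j₀ ≤ n - k - 1 := Nat.findGreatest_le _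
    have hj₀spec : W j₀ ≤ r := by
      have h := Nat.findGreatest_spec (P := fun j => W j ≤ r) (Nat.zero_le (n - k - 1))
        (show (fun j => W j ≤ r) 0 from by simpa [hW0] using hB)
      exact h
    have hj₀1 : r ≤ W (j₀ + 1) := by
      by_cases hcase : j₀ + 1 ≤ n - k - 1
      · have hnot : ¬ (W (j₀ + 1) ≤ r) :=
          Nat.findGreatest_is_greatest (P := fun j => W j ≤ r)
            (show Nat.findGreatest (fun j => W j ≤ r) (n - k - 1) < j₀ + 1 from by
              rw [← hj₀def]; omega) hcase
        linarith
      · have hj : j₀ + 1 = n - k := by omega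
        rw [hj, hWnk]
        exact hT
    have hjn : j₀ < n := by omega
    have hjkn : j₀ + k < n := by omega
    have hδ0 : 0 ≤ ν (j₀ + k) - ν j₀ := by
      have := hνmono (show j₀ ≤ j₀ + k by omega)
      linarith
    have hθex : ∃ θ : ℝ, 0 ≤ θ ∧ θ ≤ 1 ∧ W j₀ + θ * (ν (j₀ + k) - ν j₀) = r := by
      have hstepj := hstep j₀
      by_cases hδz : ν (j₀ + k) - ν j₀ = 0
      · refine ⟨0, le_rfl, zero_le_one, ?_⟩
        rw [hδz] at hstepj ⊢
        have hWW : W (j₀ + 1) = W j₀ := by rw [hstepj]; ring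
        rw [hWW] at hj₀1
        linarith
      · have hδpos : 0 < ν (j₀ + k) - ν j₀ := lt_of_le_of_ne hδ0 (Ne.symm hδz)
        refine ⟨(r - W j₀) / (ν (j₀ + k) - ν j₀),
          div_nonneg (by linarith) hδ0, ?_, ?_⟩
        · rw [div_le_one hδpos]
          linarith
        · field_simp
          ring
    obtain ⟨θ, hθ0, hθ1, hθr⟩ := hθex
    have hcard : ((finIco n (j₀ + 1) (j₀ + k)).image σ).card = k - 1 := by
      rw [Finset.card_image_of_injective _ σ.injective, card_finIco (by omega)]
      omega
    have haS : σ ⟨j₀, hjn⟩ ∉ (finIco n (j₀ + 1) (j₀ + k)).image σ := by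
      intro hmem
      obtain ⟨x, hx, hxe⟩ := Finset.mem_image.1 hmem
      have hxeq := σ.injective hxe
      subst hxeq
      have := mem_finIco.1 hx
      simp only [] at this
      omega
    have hbS : σ ⟨j₀ + k, hjkn⟩ ∉ (finIco n (j₀ + 1) (j₀ + k)).image σ := by
      intro hmem
      obtain ⟨x, hx, hxe⟩ := Finset.mem_image.1 hmem
      have hxeq := σ.injective hxe
      subst hxeq
      have := mem_finIco.1 hx
      simp only [] at this
      omega
    have hab : σ ⟨j₀, hjn⟩ ≠ σ ⟨j₀ + k, hjkn⟩ := by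
      intro h
      have h2 := congrArg Fin.val (σ.injective h)
      simp only [] at h2
      omega
    have hval : (∑ i ∈ (finIco n (j₀ + 1) (j₀ + k)).image σ, lam i)
        + (1 - θ) * lam (σ ⟨j₀, hjn⟩) + θ * lam (σ ⟨j₀ + k, hjkn⟩) = r := by
      have hsumS : ∑ i ∈ (finIco n (j₀ + 1) (j₀ + k)).image σ, lam i
          = ∑ m ∈ Finset.Ico (j₀ + 1) (j₀ + k), ν m := by
        rw [Finset.sum_image (fun i _ j _ h => σ.injective h)]
        exact sum_finIco (by omega) (fun i => lam (σ i)) ν hν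
      have hWj : W j₀ = ν j₀ + ∑ m ∈ Finset.Ico (j₀ + 1) (j₀ + k), ν m := by
        simp only [hWdef]
        exact Finset.sum_eq_sum_Ico_succ_bot (by omega) ν
      have hla : lam (σ ⟨j₀, hjn⟩) = ν j₀ := (hν j₀ hjn).symm
      have hlb : lam (σ ⟨j₀ + k, hjkn⟩) = ν (j₀ + k) := (hν (j₀ + k) hjkn).symm
      rw [hsumS, hla, hlb]
      linarith
    have hmem := exists_proj hk A hA ((finIco n (j₀ + 1) (j₀ + k)).image σ)
      (σ ⟨j₀, hjn⟩) (σ ⟨j₀ + k, hjkn⟩) θ hθ0 hθ1 haS hbS hab hcard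
    rwa [hval] at hmem


/-- for Hermitian `A`, `W_k(A)` is the real interval
`[λ_n + ... + λ_{n-k+1}, λ_1 + ... + λ_k]`. -/
theorem stmt_1 (n k : ℕ) (hk : 1 ≤ k) (hkn : k ≤ n)
    (A : Matrix (Fin n) (Fin n) ℂ) (hA : A.IsHermitian) :
    WK k A = (fun r : ℝ => (r : ℂ)) '' Set.Icc (sumKSmallest k A) (sumKLargest k A) := by
  ext z
  constructor
  · intro hz
    obtain ⟨r, ⟨hBr, hrT⟩, hrz⟩ := wk_mem_bounds hk hkn A hA hz
    refine ⟨r, ⟨?_, ?_⟩, hrz⟩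
    · rw [sumKSmallest_eq A hk hkn hA]
      exact hBr
    · rw [sumKLargest_eq A hk hkn hA]
      exact hrT
  · rintro ⟨r, ⟨hBr, hrT⟩, rfl⟩
    refine mem_WK_of_Icc hk hkn A hA r ?_ ?_
    · rw [sumKSmallest_eq A hk hkn hA] at hBr
      exact hBr
    · rw [sumKLargest_eq A hk hkn hA] at hrT
      exact hrT
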